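/- Suppose the spectral measure μ on ℝ^d satisfies sup_{η∈ℝ^d} ∫_{ℝ^d} μ(dξ)/(1 + |ξ+η|²) < ∞. Then the fundamental solution G of the wave equation satisfies condition (A3): ∫_0^T sup_{η∈ℝ^d} ∫_{ℝ^d} |FG(s)(ξ+η)|² μ(dξ) ds < ∞, and also (A6): ∫_0^T sup_{η∈ℝ^d} |FG(s)(η)|² ds < ∞. -/
import Mathlib


open MeasureTheory Set Real
open scoped ENNReal

/-- Fourier transform of the fundamental solution of the wave equation,
as a function of `t` and `r = |ξ|` (with value `t` at `r = 0`). -/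
noncomputable def waveFT (t r : ℝ) : ℝ :=
  if r = 0 then t else Real.sin (2 * Real.pi * t * r) / (2 * Real.pi * r)

lemma waveFT_sq_le {T s r : ℝ} (hs0 : 0 ≤ s) (hsT : s ≤ T) :
    (waveFT s r) ^ 2 ≤ (T ^ 2 + 1 / (4 * Real.pi ^ 2)) / (1 + r ^ 2) := by
  have hπ : (0:ℝ) < Real.pi := Real.pi_pos
  have hB : (0:ℝ) < 1 / (4 * Real.pi ^ 2) := by positivity
  have h1r : (0:ℝ) < 1 + r ^ 2 := by positivity
  rw [le_div_iff₀ h1r]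
  unfold waveFT
  split_ifs with h
  · subst h
    nlinarith [sq_nonneg s, sq_nonneg T]
  · have hr2 : (0:ℝ) < r ^ 2 := by positivity
    set w := Real.sin (2 * Real.pi * s * r) / (2 * Real.pi * r) with hw
    have hb1 : w ^ 2 ≤ s ^ 2 := by
      rw [hw, div_pow, div_le_iff₀ (by positivity)]
      have := Real.sin_sq_le_sq (x := 2 * Real.pi * s * r)
      nlinarith
    have hb2 : w ^ 2 * r ^ 2 ≤ 1 / (4 * Real.pi ^ 2) := by
      rw [hw, div_pow]
      rw [div_mul_eq_mul_div, div_le_iff₀ (by positivity), div_mul_eq_mul_div,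
        le_div_iff₀ (by positivity)]
      have := Real.sin_sq_le_one (2 * Real.pi * s * r)
      nlinarith
    nlinarith

theorem stmt_14 {d : ℕ} (μ : Measure (EuclideanSpace ℝ (Fin d)))
    (T : ℝ) (hT : 0 < T)
    (hμ : (⨆ η : EuclideanSpace ℝ (Fin d),
        ∫⁻ ξ, ENNReal.ofReal (1 / (1 + ‖ξ + η‖ ^ 2)) ∂μ) < ⊤) :
    (∫⁻ s in Set.Ioc (0 : ℝ) T,
        ⨆ η : EuclideanSpace ℝ (Fin d),
          ∫⁻ ξ, ENNReal.ofReal ((waveFT s ‖ξ + η‖) ^ 2) ∂μ) < ⊤ ∧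
    (∫⁻ s in Set.Ioc (0 : ℝ) T,
        ⨆ η : EuclideanSpace ℝ (Fin d),
          ENNReal.ofReal ((waveFT s ‖η‖) ^ 2)) < ⊤ := by
  set C : ℝ := T ^ 2 + 1 / (4 * Real.pi ^ 2) with hC
  have hC0 : 0 ≤ C := by have := Real.pi_pos; positivity
  have key : ∀ s ∈ Set.Ioc (0:ℝ) T, ∀ r : ℝ,
      ENNReal.ofReal ((waveFT s r) ^ 2)
        ≤ ENNReal.ofReal C * ENNReal.ofReal (1 / (1 + r ^ 2)) := by
    intro s hs r
    rw [← ENNReal.ofReal_mul hC0, mul_one_div]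
    exact ENNReal.ofReal_le_ofReal (waveFT_sq_le hs.1.le hs.2)
  constructor
  · have hbound : ∀ s ∈ Set.Ioc (0:ℝ) T,
        (⨆ η : EuclideanSpace ℝ (Fin d),
          ∫⁻ ξ, ENNReal.ofReal ((waveFT s ‖ξ + η‖) ^ 2) ∂μ)
        ≤ ENNReal.ofReal C * (⨆ η : EuclideanSpace ℝ (Fin d),
          ∫⁻ ξ, ENNReal.ofReal (1 / (1 + ‖ξ + η‖ ^ 2)) ∂μ) := by
      intro s hs
      refine iSup_le fun η => ?_
      calc ∫⁻ ξ, ENNReal.ofReal ((waveFT s ‖ξ + η‖) ^ 2) ∂μ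
          ≤ ∫⁻ ξ, ENNReal.ofReal C * ENNReal.ofReal (1 / (1 + ‖ξ + η‖ ^ 2)) ∂μ :=
            lintegral_mono fun ξ => key s hs _
        _ = ENNReal.ofReal C * ∫⁻ ξ, ENNReal.ofReal (1 / (1 + ‖ξ + η‖ ^ 2)) ∂μ :=
            lintegral_const_mul' _ _ ENNReal.ofReal_ne_top
        _ ≤ _ := by
            gcongr
            exact le_iSup (fun η => ∫⁻ ξ, ENNReal.ofReal (1 / (1 + ‖ξ + η‖ ^ 2)) ∂μ) η
    calc (∫⁻ s in Set.Ioc (0 : ℝ) T,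
          ⨆ η : EuclideanSpace ℝ (Fin d),
            ∫⁻ ξ, ENNReal.ofReal ((waveFT s ‖ξ + η‖) ^ 2) ∂μ)
        ≤ ∫⁻ _ in Set.Ioc (0 : ℝ) T, ENNReal.ofReal C * (⨆ η : EuclideanSpace ℝ (Fin d),
            ∫⁻ ξ, ENNReal.ofReal (1 / (1 + ‖ξ + η‖ ^ 2)) ∂μ) :=
          setLIntegral_mono' measurableSet_Ioc hbound
      _ = ENNReal.ofReal C * (⨆ η : EuclideanSpace ℝ (Fin d),
            ∫⁻ ξ, ENNReal.ofReal (1 / (1 + ‖ξ + η‖ ^ 2)) ∂μ)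
            * volume (Set.Ioc (0:ℝ) T) := by
          rw [setLIntegral_const]
      _ < ⊤ := ENNReal.mul_lt_top
          (ENNReal.mul_lt_top ENNReal.ofReal_lt_top hμ) measure_Ioc_lt_top
  · have hbound : ∀ s ∈ Set.Ioc (0:ℝ) T,
        (⨆ η : EuclideanSpace ℝ (Fin d),
          ENNReal.ofReal ((waveFT s ‖η‖) ^ 2)) ≤ ENNReal.ofReal C := by
      intro s hs
      refine iSup_le fun η => ?_
      refine (key s hs ‖η‖).trans ?_
      calc ENNReal.ofReal C * ENNReal.ofReal (1 / (1 + ‖η‖ ^ 2))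
          ≤ ENNReal.ofReal C * 1 := by
            gcongr
            refine ENNReal.ofReal_le_one.2 ?_
            rw [div_le_one (by positivity)]
            nlinarith [sq_nonneg ‖η‖]
        _ = ENNReal.ofReal C := mul_one _
    calc (∫⁻ s in Set.Ioc (0 : ℝ) T,
          ⨆ η : EuclideanSpace ℝ (Fin d), ENNReal.ofReal ((waveFT s ‖η‖) ^ 2))
        ≤ ∫⁻ _ in Set.Ioc (0 : ℝ) T, ENNReal.ofReal C :=
          setLIntegral_mono' measurableSet_Ioc hbound
      _ = ENNReal.ofReal C * volume (Set.Ioc (0:ℝ) T) := by rw [setLIntegral_const]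
      _ < ⊤ := ENNReal.mul_lt_top ENNReal.ofReal_lt_top measure_Ioc_lt_top
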